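/- Let c ∈ 𝒪 be nonzero and coprime to 3, and let m, w, b ∈ 𝒪 with mwb coprime to c. Then (w/c)₃ · ∑_{y (c)*} (y/c)₃ e(y/c) · ∑_{x (c)*} e( x⁻¹·( b·w⁻¹ − m³·(3³·w²·y)⁻¹ ) / c ) = (w/c)₃ · ∑_{q | c} μ(c/q)·N(q) · ∑_{y (c)*, 3³·b·w·y ≡ m³ (mod q)} (y/c)₃ e(y/c), where q runs over one representative of each ideal divisor of (c). -/

import Mathlib

noncomputable section

namespace CubicSeries

open scoped Classical

def ω : ℂ := Complex.exp (2 * Real.pi * Complex.I / 3)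

def O : Subring ℂ := Subring.closure {ω}

abbrev OK : Type _ := O

def δ : ℂ := ω - ω ^ 2

def eC (z : ℂ) : ℂ :=
  Complex.exp (2 * Real.pi * Complex.I * (z / δ + (starRingEnd ℂ) (z / δ)))

def rep {I : Ideal OK} (x : OK ⧸ I) : OK :=
  Function.surjInv Ideal.Quotient.mk_surjective x

/-- `N(c) = |𝒪/(c)|`, the absolute norm. -/
def Nm (c : OK) : ℕ := Nat.card (OK ⧸ Ideal.span {c})

/-- `φ(c) = |(𝒪/(c))ˣ|`. -/
def totient (c : OK) : ℕ := Nat.card ((OK ⧸ Ideal.span {c})ˣ)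

/-- a multiplicative inverse modulo `c` (an arbitrary element when `x` is not invertible). -/
def invMod (c x : OK) : OK :=
  rep (Ring.inverse (Ideal.Quotient.mk (Ideal.span {c}) x))

def T (A B c : OK) : ℂ :=
  ∑ᶠ x : OK ⧸ Ideal.span {c}, eC (((A * rep x ^ 3 + B * rep x : OK) : ℂ) / (c : ℂ))

/-- The cubic residue symbol `(x/π)₃` for a prime element `π` not dividing `3`:
the unique cube root of unity congruent to `x^{(N(π)-1)/3}` mod `π`, and `0` if `π ∣ x`. -/
def cubicCharP (π x : OK) : OK :=
  if h : ∃ ζ : OK, ζ ^ 3 = 1 ∧ π ∣ ζ - x ^ ((Nm π - 1) / 3) ∧ ¬ π ∣ x then h.choose else 0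

/-- The cubic residue symbol `(x/c)₃` for `c` coprime to `3`, defined via a factorization of
`c` into a unit times prime elements (with multiplicity). -/
def cubicChar (c x : OK) : OK :=
  if h : ∃ fs : OKˣ × Multiset OK, (∀ π ∈ fs.2, Prime π) ∧ c = (fs.1 : OK) * fs.2.prod
  then (h.choose.2.map fun π => cubicCharP π x).prod
  else 0

/-- The cubic Gauss sum `g(a,c) = ∑_{x (c)*} (x/c)₃ e(ax/c)`. -/
def gaussSum (a c : OK) : ℂ :=
  ∑ᶠ u : (OK ⧸ Ideal.span {c})ˣ,
    ((cubicChar c (rep u.val) : OK) : ℂ) * eC (((a * rep u.val : OK) : ℂ) / (c : ℂ))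

/-- The Möbius function: `μ(c) = (−1)^r` if `(c)` is a product of `r` distinct prime ideals,
and `μ(c) = 0` otherwise. -/
def moebius (c : OK) : ℤ :=
  if h : ∃ s : Finset (Ideal OK), (∀ P ∈ s, Prime P) ∧ Ideal.span {c} = ∏ P ∈ s, P
  then (-1) ^ h.choose.card
  else 0

/-- `p^n` modulo `c`, where a negative exponent means the inverse of `p^{-n}` mod `c`. -/
def ppow (c p : OK) (n : ℤ) : OK :=
  if 0 ≤ n then p ^ n.toNat else invMod c (p ^ (-n).toNat)

/-- A choice of generator of a (principal) ideal. -/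
def gen (J : Ideal OK) : OK := if h : ∃ q : OK, Ideal.span {q} = J then h.choose else 0

/-- A choice of cofactor: `cofactor c q` is a `d` with `c = q·d`, when one exists. -/
def cofactor (c q : OK) : OK := if h : ∃ d : OK, c = q * d then h.choose else 0


lemma omega_cube : ω ^ 3 = 1 := by
  rw [ω, ← Complex.exp_nat_mul]
  have : (3 : ℕ) * (2 * Real.pi * Complex.I / 3) = 2 * Real.pi * Complex.I := by
    push_cast; ring
  rw [this, Complex.exp_two_pi_mul_I]

lemma omega_ne_one : ω ≠ 1 := by
  rw [ω]
  intro h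
  rw [Complex.exp_eq_one_iff] at h
  obtain ⟨n, hn⟩ := h
  have hne : (2 : ℂ) * Real.pi * Complex.I ≠ 0 := by
    simp [Real.pi_ne_zero, Complex.I_ne_zero]
  have h3 : ((1 : ℤ) : ℂ) = ((n * 3 : ℤ) : ℂ) := by
    push_cast
    exact mul_left_cancel₀ hne (show (2*Real.pi*Complex.I) * 1 = (2*Real.pi*Complex.I) * ((n:ℂ)*3) by
      linear_combination 3 * hn)
  have h4 : (1 : ℤ) = n * 3 := by exact_mod_cast h3
  omega

lemma omega_ne_zero : ω ≠ 0 := by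
  intro h
  have := omega_cube
  rw [h] at this; simp at this

lemma omega_quad : ω ^ 2 + ω + 1 = 0 := by
  have h : (ω - 1) * (ω ^ 2 + ω + 1) = 0 := by
    linear_combination omega_cube
  rcases mul_eq_zero.mp h with h1 | h2
  · exact absurd (sub_eq_zero.mp h1) omega_ne_one
  · exact h2

lemma normSq_omega : Complex.normSq ω = 1 := by
  have h3 : Complex.normSq ω ^ 3 = 1 := by
    rw [← map_pow, omega_cube]; simp
  nlinarith [Complex.normSq_nonneg ω, sq_nonneg (Complex.normSq ω - 1), sq_nonneg (Complex.normSq ω + 1)]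

lemma conj_omega : (starRingEnd ℂ) ω = ω ^ 2 := by
  have h1 : ω * (starRingEnd ℂ) ω = 1 := by
    rw [Complex.mul_conj, normSq_omega]; simp
  have h2 : ω * ω ^ 2 = 1 := by linear_combination omega_cube
  exact mul_left_cancel₀ omega_ne_zero (h1.trans h2.symm)

lemma delta_ne_zero : δ ≠ 0 := by
  rw [δ, sub_ne_zero]
  intro h
  have h2 : ω * (1 - ω) = 0 := by linear_combination h
  rcases mul_eq_zero.mp h2 with h1 | h2
  · exact omega_ne_zero h1
  · exact omega_ne_one (by linear_combination -h2)

lemma conj_delta : (starRingEnd ℂ) δ = -δ := by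
  rw [δ, map_sub, map_pow, conj_omega]
  have h : (ω ^ 2) ^ 2 = ω := by linear_combination ω * omega_cube
  rw [h]; ring

lemma omega_mem : ω ∈ O := Subring.subset_closure rfl

/-- every element of O is a + bω with integers a b -/
lemma O_rep (z : ℂ) (hz : z ∈ O) : ∃ a b : ℤ, z = a + b * ω := by
  induction hz using Subring.closure_induction with
  | mem x hx => exact ⟨0, 1, by rw [Set.mem_singleton_iff.mp hx]; push_cast; ring⟩
  | one => exact ⟨1, 0, by push_cast; ring⟩
  | zero => exact ⟨0, 0, by push_cast; ring⟩
  | add x y _ _ hx hy =>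
      obtain ⟨a, b, rfl⟩ := hx; obtain ⟨a', b', rfl⟩ := hy
      exact ⟨a + a', b + b', by push_cast; ring⟩
  | neg x _ hx =>
      obtain ⟨a, b, rfl⟩ := hx; exact ⟨-a, -b, by push_cast; ring⟩
  | mul x y _ _ hx hy =>
      obtain ⟨a, b, rfl⟩ := hx; obtain ⟨a', b', rfl⟩ := hy
      refine ⟨a * a' - b * b', a * b' + a' * b - b * b', ?_⟩
      push_cast
      linear_combination (b : ℂ) * b' * omega_quad

lemma int_omega_mem (a b : ℤ) : (a : ℂ) + b * ω ∈ O := by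
  exact add_mem (intCast_mem O a) (mul_mem (intCast_mem O b) omega_mem)



lemma two_pi_I_ne : (2 : ℂ) * Real.pi * Complex.I ≠ 0 := by
  simp [Real.pi_ne_zero, Complex.I_ne_zero]

lemma eC_add (z w : ℂ) : eC (z + w) = eC z * eC w := by
  rw [eC, eC, eC, ← Complex.exp_add]
  congr 1
  rw [add_div, map_add]
  ring

lemma eC_arg (z : ℂ) : eC z = Complex.exp (2 * Real.pi * Complex.I * ((z - (starRingEnd ℂ) z) / δ)) := by
  rw [eC]
  congr 2
  rw [map_div₀, conj_delta, div_neg, sub_div]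
  ring

lemma eC_coe (o : OK) : eC (o : ℂ) = 1 := by
  obtain ⟨a, b, hab⟩ := O_rep (o : ℂ) o.2
  rw [eC_arg, hab]
  have hconj : (starRingEnd ℂ) ((a : ℂ) + b * ω) = a + b * ω ^ 2 := by
    rw [map_add, map_mul, conj_omega, map_intCast, map_intCast]
  rw [hconj]
  have hnum : ((a : ℂ) + b * ω - (a + b * ω ^ 2)) = b * δ := by rw [δ]; ring
  rw [hnum, mul_div_assoc, div_self delta_ne_zero, mul_one, mul_comm]
  exact Complex.exp_int_mul_two_pi_mul_I b

lemma eC_eq_one_of_mem (z : ℂ) (o : OK) : eC (z + (o:ℂ)) = eC z := by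
  rw [eC_add, eC_coe, mul_one]



lemma coe_ne_zero {c : OK} (h : c ≠ 0) : (c : ℂ) ≠ 0 := by
  simpa using h

lemma eC_one_elim {z : ℂ} (h : eC z = 1) : ∃ n : ℤ, z / δ + (starRingEnd ℂ) (z / δ) = n := by
  rw [eC, Complex.exp_eq_one_iff] at h
  obtain ⟨n, hn⟩ := h
  exact ⟨n, mul_left_cancel₀ two_pi_I_ne (by linear_combination hn)⟩

lemma dvd_of_eC_one {c A : OK} (hc : c ≠ 0) (h1 : eC ((A : ℂ) / c) = 1)
    (h2 : eC (ω * A / c) = 1) : c ∣ A := by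
  have hcz := coe_ne_zero hc
  obtain ⟨n1, hn1⟩ := eC_one_elim h1
  obtain ⟨n2, hn2⟩ := eC_one_elim h2
  set s : ℂ := (A : ℂ) / ((c : ℂ) * δ) with hs
  have e1 : s + (starRingEnd ℂ) s = n1 := by
    have : (A : ℂ) / c / δ = s := by rw [hs]; ring
    rwa [this] at hn1
  have e2 : ω * s + ω ^ 2 * (starRingEnd ℂ) s = n2 := by
    have harg : ω * (A : ℂ) / c / δ = ω * s := by rw [hs]; ring
    rw [harg, map_mul, conj_omega] at hn2
    linear_combination hn2
  have hA : (A : ℂ) = (c : ℂ) * (((n1 + n2 : ℤ) : ℂ) + (n1 : ℂ) * ω) := by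
    have hsd : (A : ℂ) = (c : ℂ) * (s * δ) := by
      rw [hs]; field_simp [delta_ne_zero]
    rw [hsd, δ]
    push_cast
    linear_combination (c:ℂ) * e2 - (c:ℂ) * ω^2 * e1 - (c:ℂ) * (n1:ℂ) * omega_quad
  refine ⟨⟨((n1 + n2 : ℤ) : ℂ) + (n1 : ℂ) * ω, int_omega_mem _ _⟩, ?_⟩
  apply Subtype.ext
  exact hA



def ωO : OK := ⟨ω, omega_mem⟩

lemma OK_rep (o : OK) : ∃ a b : ℤ, o = (a : OK) + (b : OK) * ωO := by
  obtain ⟨a, b, hab⟩ := O_rep (o : ℂ) o.2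
  refine ⟨a, b, Subtype.ext ?_⟩
  push_cast
  exact hab

lemma exists_int_dvd {c : OK} (hc : c ≠ 0) : ∃ n : ℤ, n ≠ 0 ∧ c ∣ (n : OK) := by
  obtain ⟨a, b, rfl⟩ := OK_rep c
  refine ⟨a ^ 2 - a * b + b ^ 2, ?_, ⟨((a - b : ℤ) : OK) - (b : OK) * ωO, ?_⟩⟩
  · intro h
    have hab : a = 0 ∧ b = 0 := by constructor <;> nlinarith [sq_nonneg (2*a - b), sq_nonneg b, sq_nonneg (2*b - a)]
    apply hc
    rw [hab.1, hab.2]; push_cast; ring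
  · apply Subtype.ext
    push_cast
    have : (ωO : ℂ) = ω := rfl
    rw [this]
    linear_combination ((b:ℂ)^2) * omega_quad

lemma finiteQuot {c : OK} (hc : c ≠ 0) : Finite (OK ⧸ Ideal.span {c}) := by
  obtain ⟨n, hn0, hdvd⟩ := exists_int_dvd hc
  set N := n.natAbs with hN
  haveI : NeZero N := ⟨by simpa [hN] using hn0⟩
  have hcN : c ∣ ((N : ℤ) : OK) := by
    rcases Int.natAbs_eq n with h | h
    · rw [← h]; exact hdvd
    · have : ((N : ℤ) : OK) = -(n : OK) := by rw [show ((N:ℤ)) = -n from by omega]; push_cast; ring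
      rw [this]; exact hdvd.neg_right
  apply Finite.of_surjective
    (f := fun p : ZMod N × ZMod N =>
      Ideal.Quotient.mk (Ideal.span {c}) (((p.1.val : ℤ) : OK) + ((p.2.val : ℤ) : OK) * ωO))
  intro x
  obtain ⟨o, rfl⟩ := Ideal.Quotient.mk_surjective x
  obtain ⟨a, b, rfl⟩ := OK_rep o
  refine ⟨((a : ZMod N), (b : ZMod N)), ?_⟩
  rw [Ideal.Quotient.eq, Ideal.mem_span_singleton]
  have key : ∀ m : ℤ, c ∣ ((m - (((m : ZMod N).val : ℤ)) : ℤ) : OK) := by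
    intro m
    have hNd : (N : ℤ) ∣ m - ((m : ZMod N).val : ℤ) := by
      rw [← ZMod.intCast_zmod_eq_zero_iff_dvd]
      push_cast
      simp [ZMod.natCast_val, ZMod.intCast_cast]
    obtain ⟨k, hk⟩ := hNd
    exact Dvd.dvd.trans hcN ⟨(k : OK), by rw [← Int.cast_mul, ← hk]⟩
  have k1 := key a
  have k2 := key b
  have : (((a : ZMod N).val : ℤ) : OK) + (((b : ZMod N).val : ℤ) : OK) * ωO - ((a : OK) + (b : OK) * ωO)
      = -(((a - (((a : ZMod N).val : ℤ)) : ℤ) : OK)) - (((b - (((b : ZMod N).val : ℤ)) : ℤ) : OK)) * ωO := by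
    push_cast; ring
  rw [this]
  exact dvd_sub (k1.neg_right) (k2.mul_right _)



lemma omega_re_im : ω = ((-(1/2) : ℝ) : ℂ) + ((Real.sqrt 3 / 2 : ℝ) : ℂ) * Complex.I := by
  have h1 : ω = Complex.exp (((2 * Real.pi / 3 : ℝ) : ℂ) * Complex.I) := by
    rw [ω]; congr 1; push_cast; ring
  rw [h1, Complex.exp_mul_I]
  rw [← Complex.ofReal_cos, ← Complex.ofReal_sin]
  have hc : Real.cos (2 * Real.pi / 3) = -(1/2) := by
    have : (2 * Real.pi / 3) = Real.pi - Real.pi / 3 := by ring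
    rw [this, Real.cos_pi_sub, Real.cos_pi_div_three]
  have hs : Real.sin (2 * Real.pi / 3) = Real.sqrt 3 / 2 := by
    have : (2 * Real.pi / 3) = Real.pi - Real.pi / 3 := by ring
    rw [this, Real.sin_pi_sub, Real.sin_pi_div_three]
  rw [hc, hs]

lemma normSq_comb (u v : ℝ) : Complex.normSq ((u : ℂ) + (v : ℂ) * ω) = u^2 - u*v + v^2 := by
  rw [omega_re_im]
  have h3 : Real.sqrt 3 ^ 2 = 3 := Real.sq_sqrt (by norm_num)
  simp [Complex.normSq_apply, Complex.add_re, Complex.add_im, Complex.mul_re, Complex.mul_im,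
    Complex.I_re, Complex.I_im, Complex.ofReal_re, Complex.ofReal_im]
  nlinarith [h3]

lemma decomp (z : ℂ) : z = ((z.re + z.im / Real.sqrt 3 : ℝ) : ℂ) + ((2 * z.im / Real.sqrt 3 : ℝ) : ℂ) * ω := by
  have h3 : Real.sqrt 3 > 0 := Real.sqrt_pos.mpr (by norm_num)
  have h3' : Real.sqrt 3 ^ 2 = 3 := Real.sq_sqrt (by norm_num)
  rw [omega_re_im]
  apply Complex.ext <;>
    simp [Complex.add_re, Complex.add_im, Complex.mul_re, Complex.mul_im, Complex.I_re,
      Complex.I_im, Complex.ofReal_re, Complex.ofReal_im] <;>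
    field_simp <;> nlinarith [h3, h3']

lemma exists_approx (z : ℂ) : ∃ q : OK, Complex.normSq (z - q) < 1 := by
  set x : ℝ := z.re + z.im / Real.sqrt 3
  set y : ℝ := 2 * z.im / Real.sqrt 3
  refine ⟨((round x : ℤ) : OK) + ((round y : ℤ) : OK) * ωO, ?_⟩
  have hz : z = (x : ℂ) + (y : ℂ) * ω := decomp z
  have hq : ((((round x : ℤ) : OK) + ((round y : ℤ) : OK) * ωO : OK) : ℂ)
      = ((round x : ℝ) : ℂ) + ((round y : ℝ) : ℂ) * ω := by
    push_cast
    rfl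
  rw [hq, hz]
  have hdiff : (x : ℂ) + (y : ℂ) * ω - (((round x : ℝ) : ℂ) + ((round y : ℝ) : ℂ) * ω)
      = ((x - round x : ℝ) : ℂ) + ((y - round y : ℝ) : ℂ) * ω := by
    push_cast; ring
  rw [hdiff, normSq_comb]
  have hu := abs_sub_round x
  have hv := abs_sub_round y
  set u := x - (round x : ℝ)
  set v := y - (round y : ℝ)
  clear_value u v
  have hu' : -(1/2) ≤ u ∧ u ≤ 1/2 := abs_le.mp hu
  have hv' : -(1/2) ≤ v ∧ v ≤ 1/2 := abs_le.mp hv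
  have hu2 : u^2 ≤ 1/4 := by nlinarith [hu'.1, hu'.2]
  have hv2 : v^2 ≤ 1/4 := by nlinarith [hv'.1, hv'.2]
  have huv : -(u*v) ≤ 1/4 := by nlinarith [sq_nonneg (u+v), hu2, hv2]
  nlinarith [hu2, hv2, huv]

lemma normSq_nat (o : OK) : ∃ k : ℕ, (Complex.normSq o : ℝ) = k := by
  obtain ⟨a, b, rfl⟩ := OK_rep o
  have : (((a : OK) + (b : OK) * ωO : OK) : ℂ) = ((a : ℝ) : ℂ) + ((b : ℝ) : ℂ) * ω := by
    push_cast; rfl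
  rw [this, normSq_comb]
  refine ⟨(a^2 - a*b + b^2).toNat, ?_⟩
  have hnn : (0 : ℤ) ≤ a^2 - a*b + b^2 := by nlinarith [sq_nonneg (2*a - b), sq_nonneg b]
  have hcast : (((a^2 - a*b + b^2).toNat : ℕ) : ℝ) = ((a^2 - a*b + b^2 : ℤ) : ℝ) := by
    exact_mod_cast congrArg (fun t : ℤ => (t : ℝ)) (Int.toNat_of_nonneg hnn)
  rw [hcast]
  push_cast
  ring

instance : IsPrincipalIdealRing OK := by
  constructor
  intro I
  by_cases hI : I = ⊥
  · exact ⟨0, by rw [hI]; exact (Ideal.span_singleton_eq_bot.mpr rfl).symm⟩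
  · obtain ⟨b0, hb0I, hb0⟩ := Submodule.exists_mem_ne_zero_of_ne_bot hI
    set S : Set ℕ := {k : ℕ | ∃ x ∈ I, x ≠ 0 ∧ (Complex.normSq x : ℝ) = k} with hS
    have hSne : S.Nonempty := by
      obtain ⟨k, hk⟩ := normSq_nat b0
      exact ⟨k, b0, hb0I, hb0, hk⟩
    obtain ⟨b, hbI, hbne, hbk⟩ := Nat.sInf_mem hSne
    refine ⟨b, le_antisymm ?_ ?_⟩
    · intro a haI
      rw [Ideal.submodule_span_eq, Ideal.mem_span_singleton]
      have hbz : (b : ℂ) ≠ 0 := coe_ne_zero hbne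
      obtain ⟨q, hq⟩ := exists_approx ((a : ℂ) / b)
      have hr : ((a - q * b : OK) : ℂ) = ((a : ℂ) / b - q) * b := by
        push_cast; field_simp
      have hrlt : Complex.normSq ((a - q * b : OK) : ℂ) < Complex.normSq (b : ℂ) := by
        rw [hr, Complex.normSq_mul]
        have hbpos : 0 < Complex.normSq (b : ℂ) := Complex.normSq_pos.mpr hbz
        nlinarith [hq, hbpos, Complex.normSq_nonneg ((a:ℂ)/b - q)]
      by_cases hr0 : a - q * b = 0
      · exact ⟨q, by linear_combination hr0⟩
      · exfalso
        obtain ⟨k, hk⟩ := normSq_nat (a - q * b)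
        have hkS : k ∈ S := ⟨a - q * b, I.sub_mem haI (I.mul_mem_left q hbI), hr0, hk⟩
        have h1 : sInf S ≤ k := Nat.sInf_le hkS
        have h2 : (k : ℝ) < ((sInf S : ℕ) : ℝ) := by
          rw [← hk, ← hbk]; exact hrlt
        have h3 : ((sInf S : ℕ) : ℝ) ≤ (k : ℝ) := by exact_mod_cast h1
        linarith
    · rw [Ideal.submodule_span_eq, Ideal.span_le]
      simpa using hbI



instance : IsDedekindDomain OK := IsPrincipalIdealRing.isDedekindDomain OK

lemma rep_mk {I : Ideal OK} (x : OK ⧸ I) : Ideal.Quotient.mk I (rep x) = x :=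
  Function.surjInv_eq Ideal.Quotient.mk_surjective x

lemma gen_spec (J : Ideal OK) : Ideal.span {gen J} = J := by
  rw [gen]
  have h : ∃ q : OK, Ideal.span {q} = J := by
    obtain ⟨a, ha⟩ := Submodule.IsPrincipal.principal J
    exact ⟨a, by rw [ha, Ideal.submodule_span_eq]⟩
  rw [dif_pos h]
  exact h.choose_spec

lemma cofactor_spec {c q : OK} (h : q ∣ c) : c = q * cofactor c q := by
  have h' : ∃ d : OK, c = q * d := h
  rw [cofactor, dif_pos h']
  exact h'.choose_spec

/-- finsets of distinct prime ideals with equal products are equal -/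
lemma primes_finset_inj {T T' : Finset (Ideal OK)} (hT : ∀ P ∈ T, Prime P)
    (hT' : ∀ P ∈ T', Prime P) (h : ∏ P ∈ T, P = ∏ P ∈ T', P) : T = T' := by
  have key : ∀ (S S' : Finset (Ideal OK)), (∀ P ∈ S, Prime P) → (∀ P ∈ S', Prime P) →
      ∏ P ∈ S, P = ∏ P ∈ S', P → S ⊆ S' := by
    intro S S' hS hS' hp P hP
    have hdvd : P ∣ ∏ P ∈ S', P := by
      rw [← hp]; exact Finset.dvd_prod_of_mem _ hP
    obtain ⟨P', hP', hdvd'⟩ := (hS P hP).exists_mem_finset_dvd hdvd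
    have : Associated P P' := ((hS P hP).irreducible.associated_of_dvd (hS' P' hP').irreducible hdvd')
    rwa [associated_iff_eq.mp this]
  exact Finset.Subset.antisymm (key T T' hT hT' h) (key T' T hT' hT h.symm)

lemma moebius_eq {d : OK} {T : Finset (Ideal OK)} (hT : ∀ P ∈ T, Prime P)
    (hprod : Ideal.span {d} = ∏ P ∈ T, P) : moebius d = (-1) ^ T.card := by
  rw [moebius]
  have h : ∃ s : Finset (Ideal OK), (∀ P ∈ s, Prime P) ∧ Ideal.span {d} = ∏ P ∈ s, P :=
    ⟨T, hT, hprod⟩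
  rw [dif_pos h]
  obtain ⟨hp, hs⟩ := h.choose_spec
  rw [primes_finset_inj hp hT (hs.symm.trans hprod)]

lemma moebius_eq_zero {d : OK}
    (h : ¬ ∃ s : Finset (Ideal OK), (∀ P ∈ s, Prime P) ∧ Ideal.span {d} = ∏ P ∈ s, P) :
    moebius d = 0 := by
  rw [moebius, dif_neg h]

lemma moebius_span_eq {d d' : OK} (h : Ideal.span {d} = Ideal.span ({d'} : Set OK)) :
    moebius d = moebius d' := by
  by_cases hex : ∃ s : Finset (Ideal OK), (∀ P ∈ s, Prime P) ∧ Ideal.span {d} = ∏ P ∈ s, P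
  · obtain ⟨s, hs, hp⟩ := hex
    rw [moebius_eq hs hp, moebius_eq hs (h ▸ hp)]
  · rw [moebius_eq_zero hex, moebius_eq_zero (by rwa [← h])]

lemma Nm_span_eq {d d' : OK} (h : Ideal.span {d} = Ideal.span ({d'} : Set OK)) :
    Nm d = Nm d' := by
  rw [Nm, Nm, h]

/-- the set of ideal divisors of a nonzero ideal is finite -/
lemma divisors_finite {I : Ideal OK} (hI : I ≠ ⊥) : {J : Ideal OK | J ∣ I}.Finite := by
  obtain ⟨cI, hcI⟩ := Submodule.IsPrincipal.principal I
  have hcI' : I = Ideal.span {cI} := hcI.trans (Ideal.submodule_span_eq)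
  subst hcI'
  have hc : cI ≠ 0 := by
    intro h; apply hI; rw [h]; exact Ideal.span_singleton_eq_bot.mpr rfl
  haveI : Finite (OK ⧸ Ideal.span {cI}) := finiteQuot hc
  haveI : Finite (Set (OK ⧸ Ideal.span {cI})) := inferInstance
  apply Set.Finite.of_finite_image (f := fun J : Ideal OK => (Ideal.Quotient.mk (Ideal.span {cI})) '' (J : Set OK))
  · exact Set.Finite.subset Set.finite_univ (Set.subset_univ _)
  · intro J hJ J' hJ' him
    have him' : (Ideal.Quotient.mk (Ideal.span {cI})) '' (J : Set OK)
        = (Ideal.Quotient.mk (Ideal.span {cI})) '' (J' : Set OK) := him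
    have hle : ∀ {K : Ideal OK}, K ∣ Ideal.span {cI} → (K : Set OK) =
        (Ideal.Quotient.mk (Ideal.span {cI})) ⁻¹' ((Ideal.Quotient.mk (Ideal.span {cI})) '' (K : Set OK)) := by
      intro K hK
      apply Set.Subset.antisymm (Set.subset_preimage_image _ _)
      intro x hx
      obtain ⟨y, hyK, hyx⟩ := hx
      have : x - y ∈ Ideal.span {cI} := by
        rw [← Ideal.Quotient.eq] at *; exact (hyx.symm : _)
      have hsub : x - y ∈ K := (Ideal.dvd_iff_le.mp hK) this
      simpa using K.add_mem hsub hyK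
    exact SetLike.coe_injective ((hle hJ).trans (by rw [him', ← hle hJ']))



def TofJ (J : Ideal OK) : Finset (Ideal OK) :=
  if h : ∃ T : Finset (Ideal OK), (∀ P ∈ T, Prime P) ∧ J = ∏ P ∈ T, P then h.choose else ∅

lemma TofJ_spec {J : Ideal OK} (h : ∃ T : Finset (Ideal OK), (∀ P ∈ T, Prime P) ∧ J = ∏ P ∈ T, P) :
    (∀ P ∈ TofJ J, Prime P) ∧ J = ∏ P ∈ TofJ J, P := by
  rw [TofJ, dif_pos h]
  exact h.choose_spec

lemma moebius_gen_ne_zero_elim {J : Ideal OK} (h : moebius (gen J) ≠ 0) :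
    ∃ T : Finset (Ideal OK), (∀ P ∈ T, Prime P) ∧ J = ∏ P ∈ T, P := by
  by_contra hex
  apply h
  apply moebius_eq_zero
  rw [gen_spec]
  exact hex

lemma moebius_sum {I : Ideal OK} (hI : I ≠ ⊥) :
    ∑ J ∈ (divisors_finite hI).toFinset, moebius (gen J) = if I = ⊤ then 1 else 0 := by
  set D := (divisors_finite hI).toFinset with hD
  set s := D.filter Prime with hs
  have hmemD : ∀ {J : Ideal OK}, J ∈ D ↔ J ∣ I := by
    intro J; rw [hD, Set.Finite.mem_toFinset]; rfl
  have step : ∑ J ∈ D, moebius (gen J) = ∑ T ∈ s.powerset, (-1 : ℤ) ^ T.card := by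
    apply Finset.sum_bij_ne_zero (i := fun J _ _ => TofJ J)
    · intro J hJ hne
      obtain ⟨hp, hprod⟩ := TofJ_spec (moebius_gen_ne_zero_elim hne)
      rw [Finset.mem_powerset]
      intro P hP
      rw [hs, Finset.mem_filter]
      refine ⟨hmemD.mpr (dvd_trans ?_ (hmemD.mp hJ)), hp P hP⟩
      rw [hprod]; exact Finset.dvd_prod_of_mem _ hP
    · intro J1 h11 h12 J2 h21 h22 heq
      obtain ⟨hp1, hprod1⟩ := TofJ_spec (moebius_gen_ne_zero_elim h12)
      obtain ⟨hp2, hprod2⟩ := TofJ_spec (moebius_gen_ne_zero_elim h22)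
      rw [hprod1, hprod2, heq]
    · intro T hT hTne
      rw [Finset.mem_powerset] at hT
      have hTp : ∀ P ∈ T, Prime P := fun P hP => (Finset.mem_filter.mp (hT hP)).2
      have hTd : ∀ P ∈ T, P ∣ I := fun P hP => hmemD.mp (Finset.mem_filter.mp (hT hP)).1
      refine ⟨∏ P ∈ T, P, hmemD.mpr (Finset.prod_primes_dvd I hTp hTd), ?_, ?_⟩
      · rw [moebius_eq hTp (by rw [gen_spec])]
        simp
      · obtain ⟨hp', hprod'⟩ := TofJ_spec ⟨T, hTp, rfl⟩
        exact (primes_finset_inj hp' hTp hprod'.symm)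
    · intro J hJ hne
      obtain ⟨hp, hprod⟩ := TofJ_spec (moebius_gen_ne_zero_elim hne)
      exact moebius_eq hp (by rw [gen_spec]; exact hprod)
  rw [step, Finset.sum_powerset_neg_one_pow_card]
  congr 1
  rw [eq_iff_iff]
  constructor
  · intro hse
    by_contra htop
    obtain ⟨P, hPirr, hPdvd⟩ := WfDvdMonoid.exists_irreducible_factor
      (fun hu => htop (Ideal.isUnit_iff.mp hu)) (by simpa using hI)
    have hPprime : Prime P := UniqueFactorizationMonoid.irreducible_iff_prime.mp hPirr
    have : P ∈ s := by
      rw [hs, Finset.mem_filter]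
      exact ⟨hmemD.mpr hPdvd, hPprime⟩
    rw [hse] at this
    simp at this
  · intro htop
    rw [Finset.eq_empty_iff_forall_notMem]
    intro P hP
    rw [hs, Finset.mem_filter] at hP
    have : P ∣ I := hmemD.mp hP.1
    rw [htop] at this
    exact hP.2.not_unit (isUnit_of_dvd_unit this (Ideal.isUnit_iff.mpr rfl))

lemma span_c_ne_bot {c : OK} (hc : c ≠ 0) : Ideal.span ({c} : Set OK) ≠ ⊥ := by
  simpa [Ideal.span_singleton_eq_bot] using hc

lemma isUnit_mk_iff {c o : OK} :
    IsUnit (Ideal.Quotient.mk (Ideal.span {c}) o) ↔ Ideal.span {o} ⊔ Ideal.span {c} = ⊤ := by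
  constructor
  · intro h
    obtain ⟨u, hu⟩ := h
    have h1 : Ideal.Quotient.mk (Ideal.span {c}) (o * rep ((u⁻¹ : _ˣ) : OK ⧸ Ideal.span {c})) = 1 := by
      rw [map_mul, rep_mk, ← hu]
      exact_mod_cast u.mul_inv
    rw [show (1 : OK ⧸ Ideal.span {c}) = Ideal.Quotient.mk (Ideal.span {c}) 1 from rfl,
      Ideal.Quotient.eq] at h1
    rw [Ideal.eq_top_iff_one]
    have : (1 : OK) = o * rep ((u⁻¹ : _ˣ) : OK ⧸ Ideal.span {c}) - (o * rep ((u⁻¹ : _ˣ) : OK ⧸ Ideal.span {c}) - 1) := by ring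
    rw [this]
    apply Submodule.sub_mem
    · exact Submodule.mem_sup_left (Ideal.mem_span_singleton.mpr ⟨_, rfl⟩)
    · exact Submodule.mem_sup_right h1
  · intro h
    have h1 : (1 : OK) ∈ Ideal.span {o} ⊔ Ideal.span {c} := by rw [h]; trivial
    obtain ⟨x, hx, y, hy, hxy⟩ := Submodule.mem_sup.mp h1
    obtain ⟨t, rfl⟩ := Ideal.mem_span_singleton.mp hx
    refine IsUnit.of_mul_eq_one (Ideal.Quotient.mk (Ideal.span {c}) t) ?_
    rw [← map_mul, show (1 : OK ⧸ Ideal.span {c}) = Ideal.Quotient.mk (Ideal.span {c}) 1 from rfl,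
      Ideal.Quotient.eq]
    have : o * t - 1 = -y := by linear_combination hxy
    rw [this]
    exact Submodule.neg_mem _ hy

lemma unit_indicator {c : OK} (hc : c ≠ 0) (o : OK) :
    ∑ J ∈ (divisors_finite (span_c_ne_bot hc)).toFinset, (if o ∈ J then moebius (gen J) else 0)
      = if IsUnit (Ideal.Quotient.mk (Ideal.span {c}) o) then 1 else 0 := by
  set G : Ideal OK := Ideal.span {o} ⊔ Ideal.span {c} with hG
  have hGne : G ≠ ⊥ := by
    intro h
    apply span_c_ne_bot hc
    exact le_bot_iff.mp (h ▸ le_sup_right)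
  rw [← Finset.sum_filter]
  have hfilter : ((divisors_finite (span_c_ne_bot hc)).toFinset.filter (fun J => o ∈ J))
      = (divisors_finite hGne).toFinset := by
    ext J
    rw [Finset.mem_filter, Set.Finite.mem_toFinset, Set.Finite.mem_toFinset]
    show J ∣ Ideal.span {c} ∧ o ∈ J ↔ J ∣ G
    rw [Ideal.dvd_iff_le, Ideal.dvd_iff_le, hG, sup_le_iff, Ideal.span_singleton_le_iff_mem,
      Ideal.span_singleton_le_iff_mem, and_comm]
  rw [hfilter, moebius_sum hGne]
  congr 1
  rw [eq_iff_iff, isUnit_mk_iff]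



lemma eC_shift {d : OK} (hd : d ≠ 0) (A o o' : OK)
    (h : Ideal.Quotient.mk (Ideal.span {d}) o = Ideal.Quotient.mk (Ideal.span {d}) o') :
    eC (((o * A : OK) : ℂ) / (d : ℂ)) = eC (((o' * A : OK) : ℂ) / (d : ℂ)) := by
  obtain ⟨s, hs⟩ := Ideal.mem_span_singleton.mp (Ideal.Quotient.eq.mp h)
  have hdz : (d : ℂ) ≠ 0 := coe_ne_zero hd
  have harg : ((o * A : OK) : ℂ) / (d : ℂ) = ((o' * A : OK) : ℂ) / (d : ℂ) + ((s * A : OK) : ℂ) := by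
    have ho : (o : ℂ) = (o' : ℂ) + (d : ℂ) * (s : ℂ) := by
      have : o = o' + d * s := by linear_combination hs
      rw [this]; push_cast; ring
    push_cast
    rw [ho]
    field_simp
  rw [harg, eC_eq_one_of_mem]

lemma full_sum {d : OK} (hd : d ≠ 0) (A : OK) :
    ∑ᶠ x : OK ⧸ Ideal.span {d}, eC (((rep x * A : OK) : ℂ) / (d : ℂ))
      = if d ∣ A then (Nm d : ℂ) else 0 := by
  haveI : Finite (OK ⧸ Ideal.span {d}) := finiteQuot hd
  haveI : Fintype (OK ⧸ Ideal.span {d}) := Fintype.ofFinite _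
  rw [finsum_eq_sum_of_fintype]
  have hdz : (d : ℂ) ≠ 0 := coe_ne_zero hd
  by_cases hdvd : d ∣ A
  · rw [if_pos hdvd]
    obtain ⟨t, rfl⟩ := hdvd
    have hterm : ∀ x : OK ⧸ Ideal.span {d}, eC (((rep x * (d * t) : OK) : ℂ) / (d : ℂ)) = 1 := by
      intro x
      have : ((rep x * (d * t) : OK) : ℂ) / (d : ℂ) = ((rep x * t : OK) : ℂ) := by
        push_cast; field_simp
      rw [this, eC_coe]
    simp only [hterm, Finset.sum_const, Finset.card_univ, nsmul_eq_mul, mul_one]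
    rw [Nm, Nat.card_eq_fintype_card]
  · rw [if_neg hdvd]
    have hex : ∃ x0 : OK, eC (((x0 * A : OK) : ℂ) / (d : ℂ)) ≠ 1 := by
      by_contra hall
      push_neg at hall
      apply hdvd
      apply dvd_of_eC_one hd
      · have := hall 1
        rwa [show ((1 * A : OK) : ℂ) = (A : ℂ) by push_cast; ring] at this
      · have := hall ωO
        rwa [show ((ωO * A : OK) : ℂ) / (d : ℂ) = ω * (A : ℂ) / (d : ℂ) by push_cast; rfl] at this
    obtain ⟨x0, hx0⟩ := hex
    set f : (OK ⧸ Ideal.span {d}) → ℂ := fun x => eC (((rep x * A : OK) : ℂ) / (d : ℂ)) with hf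
    have hshift : ∑ x, f x = (∑ x, f x) * eC (((x0 * A : OK) : ℂ) / (d : ℂ)) := by
      have h1 : ∑ x, f x = ∑ x, f (x + Ideal.Quotient.mk (Ideal.span {d}) x0) :=
        (Fintype.sum_equiv (Equiv.addRight (Ideal.Quotient.mk (Ideal.span {d}) x0))
          (fun x => f (x + Ideal.Quotient.mk (Ideal.span {d}) x0)) f (fun x => rfl)).symm
      nth_rewrite 1 [h1]
      rw [Finset.sum_mul]
      apply Finset.sum_congr rfl
      intro x _
      simp only [hf]
      have hmk : Ideal.Quotient.mk (Ideal.span {d}) (rep (x + Ideal.Quotient.mk (Ideal.span {d}) x0))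
          = Ideal.Quotient.mk (Ideal.span {d}) (rep x + x0) := by
        rw [rep_mk, RingHom.map_add, rep_mk]
      rw [eC_shift hd A _ _ hmk]
      have harg : (((rep x + x0) * A : OK) : ℂ) / (d : ℂ)
          = ((rep x * A : OK) : ℂ) / (d : ℂ) + ((x0 * A : OK) : ℂ) / (d : ℂ) := by
        push_cast; ring
      rw [harg, eC_add]
    have := hshift
    have hzero : (∑ x, f x) * (1 - eC (((x0 * A : OK) : ℂ) / (d : ℂ))) = 0 := by
      linear_combination this
    rcases mul_eq_zero.mp hzero with h | h
    · exact h
    · exact absurd (by linear_combination -h) hx0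



lemma subset_sum {c g d : OK} (hc : c ≠ 0) (hcd : c = g * d) (A : OK)
    [Fintype (OK ⧸ Ideal.span {c})] :
    ∑ x : OK ⧸ Ideal.span {c},
        (if rep x ∈ Ideal.span {g} then eC (((rep x * A : OK) : ℂ) / (c : ℂ)) else 0)
      = if d ∣ A then (Nm d : ℂ) else 0 := by
  have hg : g ≠ 0 := by rintro rfl; exact hc (by rw [hcd, zero_mul])
  have hd : d ≠ 0 := by rintro rfl; exact hc (by rw [hcd, mul_zero])
  haveI : Finite (OK ⧸ Ideal.span {d}) := finiteQuot hd
  haveI : Fintype (OK ⧸ Ideal.span {d}) := Fintype.ofFinite _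
  rw [← full_sum hd A, finsum_eq_sum_of_fintype, ← Finset.sum_filter]
  symm
  apply Finset.sum_bij (i := fun (y : OK ⧸ Ideal.span {d}) (_ : y ∈ Finset.univ) =>
    Ideal.Quotient.mk (Ideal.span {c}) (g * rep y))
  · intro y _
    rw [Finset.mem_filter]
    refine ⟨Finset.mem_univ _, ?_⟩
    rw [Ideal.mem_span_singleton]
    have hcdvd : c ∣ rep (Ideal.Quotient.mk (Ideal.span {c}) (g * rep y)) - g * rep y := by
      rw [← Ideal.mem_span_singleton, ← Ideal.Quotient.eq, rep_mk]
    obtain ⟨s, hs⟩ := hcdvd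
    refine ⟨rep y + d * s, ?_⟩
    have : c = g * d := hcd
    linear_combination hs + s * this
  · intro y1 _ y2 _ heq
    have hcdvd : c ∣ g * rep y1 - g * rep y2 := by
      rw [← Ideal.mem_span_singleton, ← Ideal.Quotient.eq]; exact heq
    rw [hcd] at hcdvd
    have h2 : g * d ∣ g * (rep y1 - rep y2) := by
      rwa [show g * (rep y1 - rep y2) = g * rep y1 - g * rep y2 by ring]
    have hddvd : d ∣ rep y1 - rep y2 := (mul_dvd_mul_iff_left hg).mp h2
    have : Ideal.Quotient.mk (Ideal.span {d}) (rep y1) = Ideal.Quotient.mk (Ideal.span {d}) (rep y2) := by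
      rw [Ideal.Quotient.eq, Ideal.mem_span_singleton]; exact hddvd
    rwa [rep_mk, rep_mk] at this
  · intro x hx
    rw [Finset.mem_filter, Ideal.mem_span_singleton] at hx
    obtain ⟨y0, hy0⟩ := hx.2
    refine ⟨Ideal.Quotient.mk (Ideal.span {d}) y0, Finset.mem_univ _, ?_⟩
    have hcdvd : c ∣ g * (rep (Ideal.Quotient.mk (Ideal.span {d}) y0) - y0) := by
      rw [hcd]
      apply mul_dvd_mul_left
      rw [← Ideal.mem_span_singleton, ← Ideal.Quotient.eq, rep_mk]
    have : Ideal.Quotient.mk (Ideal.span {c}) (g * rep (Ideal.Quotient.mk (Ideal.span {d}) y0))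
        = Ideal.Quotient.mk (Ideal.span {c}) (g * y0) := by
      rw [Ideal.Quotient.eq, Ideal.mem_span_singleton]
      rwa [show g * rep (Ideal.Quotient.mk (Ideal.span {d}) y0) - g * y0
        = g * (rep (Ideal.Quotient.mk (Ideal.span {d}) y0) - y0) by ring]
    rw [this, ← hy0, rep_mk]
  · intro y _
    have hmk : Ideal.Quotient.mk (Ideal.span {c}) (rep (Ideal.Quotient.mk (Ideal.span {c}) (g * rep y)))
        = Ideal.Quotient.mk (Ideal.span {c}) (g * rep y) := by rw [rep_mk]
    rw [eC_shift hc A _ _ hmk]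
    congr 1
    have hgz : (g : ℂ) ≠ 0 := coe_ne_zero hg
    have hdz : (d : ℂ) ≠ 0 := coe_ne_zero hd
    have hccast : (c : ℂ) = (g : ℂ) * (d : ℂ) := by rw [hcd]; push_cast; ring
    push_cast
    rw [hccast]
    field_simp



lemma gen_dvd_of_mem_div {c : OK} (hc : c ≠ 0) {J : Ideal OK}
    (hJ : J ∈ (divisors_finite (span_c_ne_bot hc)).toFinset) : gen J ∣ c := by
  rw [Set.Finite.mem_toFinset] at hJ
  have hle : Ideal.span {c} ≤ J := Ideal.dvd_iff_le.mp hJ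
  rw [← gen_spec J] at hle
  exact Ideal.span_singleton_le_span_singleton.mp hle

lemma ramanujan {c : OK} (hc : c ≠ 0) (A B : OK)
    (hAB : ∀ q : OK, q ∣ c → (q ∣ A ↔ q ∣ B))
    [Fintype (OK ⧸ Ideal.span {c})] [Fintype (OK ⧸ Ideal.span {c})ˣ] :
    ∑ v : (OK ⧸ Ideal.span {c})ˣ,
        eC (((rep ((v : (OK ⧸ Ideal.span {c})ˣ) : OK ⧸ Ideal.span {c}) * A : OK) : ℂ) / (c : ℂ))
      = ∑ J ∈ (divisors_finite (span_c_ne_bot hc)).toFinset,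
          (moebius (cofactor c (gen J)) : ℂ) * (Nm (gen J) : ℂ) * (if gen J ∣ B then 1 else 0) := by
  classical
  set Q := OK ⧸ Ideal.span {c}
  set D := (divisors_finite (span_c_ne_bot hc)).toFinset with hD
  set f : Q → ℂ := fun x => eC (((rep x * A : OK) : ℂ) / (c : ℂ)) with hf
  -- step 1 : unit sum = indicator sum
  have step1 : ∑ v : Qˣ, f ((v : Qˣ) : Q) = ∑ x : Q, (if IsUnit x then f x else 0) := by
    rw [← Finset.sum_filter]
    apply Finset.sum_bij (i := fun (v : Qˣ) (_ : v ∈ Finset.univ) => ((v : Qˣ) : Q))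
    · intro v _; rw [Finset.mem_filter]; exact ⟨Finset.mem_univ _, v.isUnit⟩
    · intro v1 _ v2 _ h; exact Units.ext h
    · intro x hx
      rw [Finset.mem_filter] at hx
      obtain ⟨u, hu⟩ := hx.2
      exact ⟨u, Finset.mem_univ _, hu⟩
    · intro v _; rfl
  -- step 2 : indicator via moebius
  have step2 : ∀ x : Q, (if IsUnit x then f x else 0)
      = ∑ J ∈ D, (if rep x ∈ J then (moebius (gen J) : ℂ) else 0) * f x := by
    intro x
    have h := unit_indicator hc (rep x)
    rw [rep_mk] at h
    have hcast : (∑ J ∈ D, if rep x ∈ J then (moebius (gen J) : ℂ) else 0)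
        = (if IsUnit x then (1:ℂ) else 0) := by
      have h2 := congrArg (fun t : ℤ => (t : ℂ)) h
      push_cast [apply_ite (fun t : ℤ => (t : ℂ))] at h2
      convert h2 using 2
    rw [← Finset.sum_mul, hcast]
    split_ifs <;> simp
  -- step 3/4 : swap and evaluate inner sums
  have step34 : ∑ x : Q, (if IsUnit x then f x else 0)
      = ∑ J ∈ D, (moebius (gen J) : ℂ) *
          (if cofactor c (gen J) ∣ A then (Nm (cofactor c (gen J)) : ℂ) else 0) := by
    calc ∑ x : Q, (if IsUnit x then f x else 0)
        = ∑ x : Q, ∑ J ∈ D, (if rep x ∈ J then (moebius (gen J) : ℂ) else 0) * f x := by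
          apply Finset.sum_congr rfl; intro x _; exact step2 x
      _ = ∑ J ∈ D, ∑ x : Q, (if rep x ∈ J then (moebius (gen J) : ℂ) else 0) * f x :=
          Finset.sum_comm
      _ = ∑ J ∈ D, (moebius (gen J) : ℂ) *
            (if cofactor c (gen J) ∣ A then (Nm (cofactor c (gen J)) : ℂ) else 0) := by
          apply Finset.sum_congr rfl
          intro J hJ
          have hgdvd : gen J ∣ c := gen_dvd_of_mem_div hc hJ
          have hcd := cofactor_spec hgdvd
          rw [← subset_sum hc hcd A, Finset.mul_sum]
          apply Finset.sum_congr rfl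
          intro x _
          rw [gen_spec]
          split_ifs <;> simp [hf] <;> ring
  rw [step1, step34]
  -- step 5 : reindex by complementary divisor
  have hD_mem : ∀ {J : Ideal OK}, J ∈ D ↔ J ∣ Ideal.span {c} := by
    intro J; rw [hD, Set.Finite.mem_toFinset]; rfl
  have sigma_mem : ∀ J ∈ D, Ideal.span {cofactor c (gen J)} ∈ D := by
    intro J hJ
    have hgdvd : gen J ∣ c := gen_dvd_of_mem_div hc hJ
    have hcd := cofactor_spec hgdvd
    rw [hD_mem]
    rw [span_singleton_dvd_span_singleton_iff_dvd]
    exact ⟨gen J, by linear_combination hcd⟩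
  have span_cof : ∀ J ∈ D, Ideal.span {cofactor c (gen (Ideal.span {cofactor c (gen J)}))}
      = Ideal.span ({gen J} : Set OK) := by
    intro J hJ
    have hgdvd : gen J ∣ c := gen_dvd_of_mem_div hc hJ
    have hcd := cofactor_spec hgdvd
    set g := gen J
    set d := cofactor c g
    have hd0 : d ≠ 0 := by rintro h; apply hc; rw [hcd, h, mul_zero]
    have hg' := gen_spec (Ideal.span ({d} : Set OK))
    -- gen (span d) generates span d ; c = gen(span d) * cofactor c (gen (span d))
    have hgd_dvd : gen (Ideal.span ({d} : Set OK)) ∣ c := by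
      have : Ideal.span {c} ≤ Ideal.span ({d} : Set OK) := by
        rw [Ideal.span_singleton_le_span_singleton]
        exact ⟨g, by rw [hcd]; ring⟩
      rw [← hg'] at this
      exact Ideal.span_singleton_le_span_singleton.mp this
    have hcd2 := cofactor_spec hgd_dvd
    -- span equality via ideal cancellation
    have a1 : Associated (gen (Ideal.span ({d} : Set OK))) d :=
      Ideal.span_singleton_eq_span_singleton.mp hg'
    have a2 : Associated (d * cofactor c (gen (Ideal.span ({d} : Set OK)))) (d * g) := by
      have a3 : Associated (d * cofactor c (gen (Ideal.span ({d} : Set OK))))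
          (gen (Ideal.span ({d} : Set OK)) * cofactor c (gen (Ideal.span ({d} : Set OK)))) :=
        Associated.mul_right a1.symm _
      have heq : gen (Ideal.span ({d} : Set OK)) * cofactor c (gen (Ideal.span ({d} : Set OK))) = d * g := by
        rw [← hcd2, hcd]; ring
      rwa [heq] at a3
    have hIdeq : Ideal.span ({d} : Set OK) * Ideal.span {cofactor c (gen (Ideal.span ({d} : Set OK)))}
        = Ideal.span ({d} : Set OK) * Ideal.span ({g} : Set OK) := by
      rw [Ideal.span_singleton_mul_span_singleton, Ideal.span_singleton_mul_span_singleton]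
      exact Ideal.span_singleton_eq_span_singleton.mpr a2
    have hdne : Ideal.span ({d} : Set OK) ≠ 0 := by
      rw [Ideal.zero_eq_bot]; exact span_c_ne_bot hd0
    exact mul_left_cancel₀ hdne hIdeq
  apply Finset.sum_nbij' (i := fun J => Ideal.span ({cofactor c (gen J)} : Set OK))
    (j := fun J => Ideal.span ({cofactor c (gen J)} : Set OK))
  · exact sigma_mem
  · exact sigma_mem
  · intro J hJ
    rw [span_cof J hJ, gen_spec]
  · intro J hJ
    rw [span_cof J hJ, gen_spec]
  · intro J hJ
    have hgdvd : gen J ∣ c := gen_dvd_of_mem_div hc hJ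
    have hcd := cofactor_spec hgdvd
    set g := gen J with hgdef
    set d := cofactor c g with hddef
    have hd0 : d ≠ 0 := by rintro h; apply hc; rw [hcd, h, mul_zero]
    have hdvd_c : d ∣ c := ⟨g, by rw [hcd]; ring⟩
    -- gen (span {d}) is associated to d
    have hg' := gen_spec (Ideal.span ({d} : Set OK))
    have hmoe : moebius (cofactor c (gen (Ideal.span ({d} : Set OK)))) = moebius g :=
      moebius_span_eq (span_cof J hJ)
    have hNm : Nm (gen (Ideal.span ({d} : Set OK))) = Nm d := Nm_span_eq hg'
    have hBiff : gen (Ideal.span ({d} : Set OK)) ∣ B ↔ d ∣ B :=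
      (Ideal.span_singleton_eq_span_singleton.mp hg').dvd_iff_dvd_left
    have hABd : d ∣ A ↔ d ∣ B := hAB d hdvd_c
    rw [hmoe, hNm]
    rw [show (if gen (Ideal.span ({d} : Set OK)) ∣ B then (1:ℂ) else 0) = (if d ∣ B then (1:ℂ) else 0) from by
      split_ifs with h1 h2
      · rfl
      · exact absurd (hBiff.mp h1) h2
      · exact absurd (hBiff.mpr ‹_›) h1
      · rfl]
    by_cases hdA : d ∣ A
    · rw [if_pos hdA, if_pos (hABd.mp hdA)]; ring
    · rw [if_neg hdA, if_neg (fun h => hdA (hABd.mpr h))]; ring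


section Helpers

open scoped Classical

lemma isUnit_mk_of_coprime {c x : OK} (h : IsCoprime x c) :
    IsUnit (Ideal.Quotient.mk (Ideal.span {c}) x) := by
  obtain ⟨a, b', hab⟩ := h
  apply IsUnit.of_mul_eq_one (Ideal.Quotient.mk (Ideal.span {c}) a)
  rw [← RingHom.map_mul, show (1 : OK ⧸ Ideal.span {c}) = Ideal.Quotient.mk (Ideal.span {c}) 1 from rfl,
    Ideal.Quotient.eq, Ideal.mem_span_singleton]
  exact ⟨-b', by linear_combination hab⟩

lemma dvd_mul_invMod {c x : OK} (h : IsUnit (Ideal.Quotient.mk (Ideal.span {c}) x)) :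
    c ∣ x * invMod c x - 1 := by
  rw [← Ideal.mem_span_singleton, ← Ideal.Quotient.eq]
  rw [RingHom.map_mul, invMod, rep_mk, Ring.mul_inverse_cancel _ h]
  rfl

lemma dvd_iff_of_unit_factor {c E iE A B q : OK} (hE : c ∣ E * iE - 1) (hEA : c ∣ E * A - B)
    (hq : q ∣ c) : q ∣ A ↔ q ∣ B := by
  obtain ⟨t1, ht1⟩ := hE
  obtain ⟨t2, ht2⟩ := hEA
  obtain ⟨s, hs⟩ := hq
  constructor
  · rintro ⟨a, rfl⟩
    exact ⟨E * a - s * t2, by linear_combination -ht2 - t2 * hs⟩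
  · rintro ⟨b', rfl⟩
    exact ⟨iE * b' + s * t2 * iE - s * t1 * A, by
      linear_combination (-A) * ht1 + iE * ht2 + (iE * t2 - A * t1) * hs⟩

lemma invMod_rep_unit {c : OK} (v : (OK ⧸ Ideal.span {c})ˣ) :
    invMod c (rep (v : OK ⧸ Ideal.span {c})) = rep ((v⁻¹ : (OK ⧸ Ideal.span {c})ˣ) : OK ⧸ Ideal.span {c}) := by
  rw [invMod, rep_mk, Ring.inverse_unit]

end Helpers

/- Statement 10 -/
theorem stmt10 (c m w b : OK) (hc0 : c ≠ 0) (hc3 : IsCoprime c 3)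
    (hco : IsCoprime (m * w * b) c) :
    ((cubicChar c w : OK) : ℂ) *
      ∑ᶠ u : (OK ⧸ Ideal.span {c})ˣ,
        ((cubicChar c (rep u.val) : OK) : ℂ) * eC (((rep u.val : OK) : ℂ) / (c : ℂ)) *
          ∑ᶠ v : (OK ⧸ Ideal.span {c})ˣ,
            eC (((invMod c (rep v.val) *
              (b * invMod c w - m ^ 3 * invMod c (3 ^ 3 * w ^ 2 * rep u.val)) : OK) : ℂ) /
              (c : ℂ)) =
    ((cubicChar c w : OK) : ℂ) *
      ∑ᶠ J ∈ {J : Ideal OK | J ∣ Ideal.span {c}},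
        (moebius (cofactor c (gen J)) : ℂ) * (Nm (gen J) : ℂ) *
          ∑ᶠ u : (OK ⧸ Ideal.span {c})ˣ,
            (if gen J ∣ 3 ^ 3 * b * w * rep u.val - m ^ 3 then
              ((cubicChar c (rep u.val) : OK) : ℂ) * eC (((rep u.val : OK) : ℂ) / (c : ℂ))
            else 0) := by
  classical
  haveI hFin : Finite (OK ⧸ Ideal.span {c}) := finiteQuot hc0
  haveI : Fintype (OK ⧸ Ideal.span {c}) := Fintype.ofFinite _
  haveI : Finite (OK ⧸ Ideal.span {c})ˣ := inferInstance
  haveI : Fintype (OK ⧸ Ideal.span {c})ˣ := Fintype.ofFinite _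
  set Q := OK ⧸ Ideal.span {c} with hQ
  set mkc := Ideal.Quotient.mk (Ideal.span {c}) with hmkc
  set D := (divisors_finite (span_c_ne_bot hc0)).toFinset with hD
  -- coprimality facts
  have hw_cop : IsCoprime w c := (hco.of_mul_left_left).of_mul_left_right
  have h3_cop : IsCoprime (3 : OK) c := hc3.symm
  have hw_unit : IsUnit (mkc w) := isUnit_mk_of_coprime hw_cop
  have h3_unit : IsUnit (mkc (3 : OK)) := isUnit_mk_of_coprime h3_cop
  congr 1
  -- convert the RHS set-finsum into a Finset sum
  have hset : {J : Ideal OK | J ∣ Ideal.span {c}} = (↑D : Set (Ideal OK)) := by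
    rw [hD, Set.Finite.coe_toFinset]
  rw [hset, finsum_mem_coe_finset, finsum_eq_sum_of_fintype]
  -- per-u notation
  set T1 : Qˣ → ℂ := fun u => ((cubicChar c (rep (u : Q)) : OK) : ℂ) * eC (((rep (u : Q) : OK) : ℂ) / (c : ℂ)) with hT1
  set Af : Qˣ → OK := fun u => b * invMod c w - m ^ 3 * invMod c (3 ^ 3 * w ^ 2 * rep (u : Q)) with hAf
  set Bf : Qˣ → OK := fun u => 3 ^ 3 * b * w * rep (u : Q) - m ^ 3 with hBf
  -- inner v-sum equals the ramanujan divisor sum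
  have inner_eq : ∀ u : Qˣ,
      (∑ᶠ v : Qˣ, eC (((invMod c (rep (v : Q)) * Af u : OK) : ℂ) / (c : ℂ)))
        = ∑ J ∈ D, (moebius (cofactor c (gen J)) : ℂ) * (Nm (gen J) : ℂ) *
            (if gen J ∣ Bf u then 1 else 0) := by
    intro u
    have hu_unit : IsUnit (mkc (rep (u : Q))) := by rw [hmkc, rep_mk]; exact ⟨u, rfl⟩
    have hE_unit : IsUnit (mkc (3 ^ 3 * w ^ 2 * rep (u : Q))) := by
      rw [hmkc, RingHom.map_mul, RingHom.map_mul, RingHom.map_pow, RingHom.map_pow]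
      exact ((h3_unit.pow 3).mul (hw_unit.pow 2)).mul (by rw [← hmkc]; exact hu_unit)
    have hEA : c ∣ (3 ^ 3 * w ^ 2 * rep (u : Q)) * Af u - Bf u := by
      obtain ⟨s1, hs1⟩ := dvd_mul_invMod hw_unit
      obtain ⟨s2, hs2⟩ := dvd_mul_invMod hE_unit
      refine ⟨3 ^ 3 * b * w * rep (u : Q) * s1 - m ^ 3 * s2, ?_⟩
      rw [hAf, hBf]
      linear_combination (3:OK) ^ 3 * b * w * rep (u : Q) * hs1 - m ^ 3 * hs2
    have hAB : ∀ q : OK, q ∣ c → (q ∣ Af u ↔ q ∣ Bf u) := fun q hq =>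
      dvd_iff_of_unit_factor (dvd_mul_invMod hE_unit) hEA hq
    rw [finsum_eq_sum_of_fintype]
    have hre : ∀ v : Qˣ, eC (((invMod c (rep (v : Q)) * Af u : OK) : ℂ) / (c : ℂ))
        = eC (((rep (((v⁻¹ : Qˣ) : Qˣ) : Q) * Af u : OK) : ℂ) / (c : ℂ)) := by
      intro v
      rw [invMod_rep_unit]
    calc (∑ v : Qˣ, eC (((invMod c (rep (v : Q)) * Af u : OK) : ℂ) / (c : ℂ)))
        = ∑ v : Qˣ, eC (((rep (((v⁻¹ : Qˣ) : Qˣ) : Q) * Af u : OK) : ℂ) / (c : ℂ)) :=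
          Finset.sum_congr rfl (fun v _ => hre v)
      _ = ∑ v : Qˣ, eC (((rep ((v : Qˣ) : Q) * Af u : OK) : ℂ) / (c : ℂ)) :=
          Fintype.sum_equiv (Equiv.inv Qˣ)
            (fun v => eC (((rep (((v⁻¹ : Qˣ) : Qˣ) : Q) * Af u : OK) : ℂ) / (c : ℂ)))
            (fun v => eC (((rep ((v : Qˣ) : Q) * Af u : OK) : ℂ) / (c : ℂ)))
            (fun v => rfl)
      _ = ∑ J ∈ D, (moebius (cofactor c (gen J)) : ℂ) * (Nm (gen J) : ℂ) *
            (if gen J ∣ Bf u then 1 else 0) := ramanujan hc0 (Af u) (Bf u) hAB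
  -- assemble
  calc (∑ u : Qˣ, T1 u * ∑ᶠ v : Qˣ, eC (((invMod c (rep (v : Q)) * Af u : OK) : ℂ) / (c : ℂ)))
      = ∑ u : Qˣ, ∑ J ∈ D, T1 u * ((moebius (cofactor c (gen J)) : ℂ) * (Nm (gen J) : ℂ) *
          (if gen J ∣ Bf u then 1 else 0)) := by
        apply Finset.sum_congr rfl
        intro u _
        rw [inner_eq u, Finset.mul_sum]
    _ = ∑ J ∈ D, ∑ u : Qˣ, T1 u * ((moebius (cofactor c (gen J)) : ℂ) * (Nm (gen J) : ℂ) *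
          (if gen J ∣ Bf u then 1 else 0)) := Finset.sum_comm
    _ = ∑ J ∈ D, (moebius (cofactor c (gen J)) : ℂ) * (Nm (gen J) : ℂ) *
          ∑ᶠ u : Qˣ, (if gen J ∣ 3 ^ 3 * b * w * rep (u : Q) - m ^ 3 then T1 u else 0) := by
        apply Finset.sum_congr rfl
        intro J _
        rw [finsum_eq_sum_of_fintype, Finset.mul_sum]
        apply Finset.sum_congr rfl
        intro u _
        rw [hBf]
        split_ifs <;> ring

end CubicSeries
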